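/- Let T be a finite connected poset with a minimal element 0. Then T is a tree if and only if every fence in T has length at most two, and every fence of length two has the form x > y < z (i.e., there is no fence x < y > z). -/

import Mathlib

open scoped Classical

namespace ReebPoset

variable {X : Type*}

/-- Two elements of a poset are comparable. -/
def Cmp [PartialOrder X] (a b : X) : Prop := a ≤ b ∨ b ≤ a

/-- A poset path from `x` to `y`: a finite sequence of consecutively comparable elements. -/
structure Path [PartialOrder X] (x y : X) where
  n : ℕ
  pts : Fin (n + 1) → X
  first : pts 0 = x
  last : pts (Fin.last n) = y
  step : ∀ i : Fin n, Cmp (pts i.castSucc) (pts i.succ)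

/-- A poset is connected if any two points are joined by a poset path. -/
def Connected (X : Type*) [PartialOrder X] : Prop := ∀ x y : X, Nonempty (Path x y)

/-- The `f`-length of a poset path. -/
noncomputable def flen [PartialOrder X] (f : X → ℝ) {x y : X} (γ : Path x y) : ℝ :=
  ∑ i : Fin γ.n, |f (γ.pts i.succ) - f (γ.pts i.castSucc)|

/-- The metric induced by the filtration `f` (the Reeb metric). -/
noncomputable def df [PartialOrder X] (f : X → ℝ) (x y : X) : ℝ :=
  sInf {L | ∃ γ : Path x y, L = flen f γ}

/-- The Gromov product associated to `f`. -/
noncomputable def gf [PartialOrder X] (f : X → ℝ) (x y : X) : ℝ :=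
  (f x + f y - df f x y) / 2

/-- The poset hyperbolicity of `(X, f)`. -/
noncomputable def hypf (X : Type*) [PartialOrder X] (f : X → ℝ) : ℝ :=
  sInf {ε : ℝ | 0 ≤ ε ∧ ∀ x y z : X, gf f x z ≥ min (gf f x y) (gf f y z) - ε}

/-- The merge value `m_f(x,y)`: max over poset paths of the min of `f` along the path. -/
noncomputable def mf [PartialOrder X] (f : X → ℝ) (x y : X) : ℝ :=
  sSup {m | ∃ γ : Path x y,
    m = Finset.univ.inf' Finset.univ_nonempty (fun i : Fin (γ.n + 1) => f (γ.pts i))}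

/-- A poset path is a fence if its points are distinct and non-consecutive points
are incomparable. -/
def IsFence [PartialOrder X] {x y : X} (γ : Path x y) : Prop :=
  Function.Injective γ.pts ∧
  ∀ i j : Fin (γ.n + 1), (i : ℕ) + 2 ≤ (j : ℕ) → ¬ Cmp (γ.pts i) (γ.pts j)

/-- The maximal length of a fence in the poset `X`. -/
noncomputable def MF (X : Type*) [PartialOrder X] : ℕ :=
  sSup {n : ℕ | ∃ x y : X, ∃ γ : Path x y, IsFence γ ∧ γ.n = n}

/-- A merging point: an element covering at least two distinct elements. -/
def Merging [PartialOrder X] (x : X) : Prop := ∃ y z : X, y ≠ z ∧ y ⋖ x ∧ z ⋖ x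

/-- A poset is a tree if every down-set is a chain. -/
def IsTreePoset (X : Type*) [PartialOrder X] : Prop :=
  ∀ a b c : X, a ≤ c → b ≤ c → (a ≤ b ∨ b ≤ a)

/-- The covering graph of a poset. -/
def covGraph (X : Type*) [PartialOrder X] : SimpleGraph X :=
  SimpleGraph.fromRel (fun a b => a ⋖ b)

/-- The number of elements covered by `x`. -/
noncomputable def iota [PartialOrder X] [Fintype X] (x : X) : ℕ :=
  (Finset.univ.filter (fun y => y ⋖ x)).card

/-- The first Betti number of a graph: the minimal number of edges one needs to remove
to obtain a tree. -/
noncomputable def betti (G : SimpleGraph X) : ℕ :=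
  sInf {k | ∃ s : Set (Sym2 X), s.ncard = k ∧ (G.deleteEdges s).IsTree}

/-- `x ∼ y` iff some poset path from `x` to `y` is `f`-constant. -/
def constRel [PartialOrder X] (f : X → ℝ) (x y : X) : Prop :=
  ∃ γ : Path x y, ∀ i : Fin (γ.n + 1), f (γ.pts i) = f x

/-- `[x] ≤ [y]` in the Reeb poset iff some poset path from `x` to `y` is `f`-nondecreasing. -/
def ndRel [PartialOrder X] (f : X → ℝ) (x y : X) : Prop :=
  ∃ γ : Path x y, ∀ i : Fin γ.n, f (γ.pts i.castSucc) ≤ f (γ.pts i.succ)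

/-- `x ∼ y` in the Reeb tree construction: some poset path from `x` to `y` has all
`f`-values at least `max (f x) (f y)`. -/
def treeEq [PartialOrder X] (f : X → ℝ) (x y : X) : Prop :=
  ∃ γ : Path x y, ∀ i : Fin (γ.n + 1), max (f x) (f y) ≤ f (γ.pts i)

/-- `[x] ≤ [y]` in the Reeb tree poset: some poset path from `x` to `y` has all
`f`-values at least `f x`. -/
def treeLe [PartialOrder X] (f : X → ℝ) (x y : X) : Prop :=
  ∃ γ : Path x y, ∀ i : Fin (γ.n + 1), f x ≤ f (γ.pts i)

end ReebPoset
open ReebPoset in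
/-- a finite connected poset with a smallest element is a tree iff every
fence has length at most two, and every fence of length two has the form `x > y < z`. -/
theorem stmt6 {X : Type*} [PartialOrder X] [Fintype X]
    (hc : Connected X) (h0 : ∃ b : X, ∀ x : X, b ≤ x) :
    IsTreePoset X ↔
      ∀ (x y : X) (γ : Path x y), IsFence γ →
        γ.n ≤ 2 ∧ (γ.n = 2 → γ.pts 1 < γ.pts 0 ∧ γ.pts 1 < γ.pts 2) := by
  constructor
  · intro hT x y γ hF
    obtain ⟨n, pts, hfst, hlst, hstep⟩ := γ
    obtain ⟨hinj, hnc⟩ := hF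
    have key : ∀ k : ℕ, ∀ hk : k + 2 ≤ n,
        pts ⟨k+1, by omega⟩ < pts ⟨k, by omega⟩ ∧
        pts ⟨k+1, by omega⟩ < pts ⟨k+2, by omega⟩ := by
      intro k hk
      have h1 : Cmp (pts ⟨k, by omega⟩) (pts ⟨k+1, by omega⟩) :=
        hstep ⟨k, by omega⟩
      have h2 : Cmp (pts ⟨k+1, by omega⟩) (pts ⟨k+2, by omega⟩) :=
        hstep ⟨k+1, by omega⟩
      have h3 : ¬ Cmp (pts ⟨k, by omega⟩) (pts ⟨k+2, by omega⟩) :=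
        hnc ⟨k, by show k < n + 1; omega⟩ ⟨k+2, by show k + 2 < n + 1; omega⟩ (by simp)
      set a := pts ⟨k, by omega⟩
      set b := pts ⟨k+1, by omega⟩
      set c := pts ⟨k+2, by omega⟩
      have hab : a ≠ b := by
        intro h; have := hinj h; simp [Fin.ext_iff] at this
      have hbc : b ≠ c := by
        intro h; have := hinj h; simp [Fin.ext_iff] at this
      have hba : b ≤ a := by
        rcases h1 with h1 | h1
        · rcases h2 with h2 | h2
          · exact absurd (Or.inl (le_trans h1 h2)) h3
          · exact absurd (hT a c b h1 h2) h3
        · exact h1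
      have hbc' : b ≤ c := by
        rcases h2 with h2 | h2
        · exact h2
        · exact absurd (Or.inr (le_trans h2 hba)) h3
      exact ⟨lt_of_le_of_ne hba (Ne.symm hab), lt_of_le_of_ne hbc' hbc⟩
    have hn2 : n ≤ 2 := by
      by_contra h
      push_neg at h
      obtain ⟨-, k1⟩ := key 0 (by omega)
      obtain ⟨k2, -⟩ := key 1 (by omega)
      exact lt_asymm k1 k2
    refine ⟨hn2, fun hn => ?_⟩
    dsimp only at hn
    subst hn
    obtain ⟨k1, k2⟩ := key 0 (by omega)
    exact ⟨k1, k2⟩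
  · intro h a b c hac hbc
    by_contra hcmp
    have hab : ¬ a ≤ b := fun hh => hcmp (Or.inl hh)
    have hba : ¬ b ≤ a := fun hh => hcmp (Or.inr hh)
    have hane : a ≠ c := by rintro rfl; exact hba hbc
    have hbne : b ≠ c := by rintro rfl; exact hab hac
    have habne : a ≠ b := by rintro rfl; exact hab le_rfl
    let γ : Path a b :=
      { n := 2
        pts := ![a, c, b]
        first := rfl
        last := rfl
        step := by
          intro i
          fin_cases i
          · exact Or.inl hac
          · exact Or.inr hbc }
    have hfence : IsFence γ := by
      constructor
      · intro i j hij
        have hij' : (![a, c, b] : Fin 3 → X) i = ![a, c, b] j := hij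
        fin_cases i <;> fin_cases j <;> simp at hij' <;>
          first
            | rfl
            | (exact absurd hij' hane)
            | (exact absurd hij'.symm hane)
            | (exact absurd hij' habne)
            | (exact absurd hij'.symm habne)
            | (exact absurd hij' hbne)
            | (exact absurd hij'.symm hbne)
      · intro i j hij
        fin_cases i <;> fin_cases j <;> simp at hij ⊢ <;>
          try omega
        intro hC
        exact hcmp hC
        exact absurd hij (by simp [γ])
    have hform := (h a b γ hfence).2 rfl
    have hca : c < a := by
      have := hform.1
      simpa [γ] using this
    exact hca.not_ge hac
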